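/- Let q be an odd prime power and let L be the 2-dimensional space of symmetric 3×3 matrices {[[0,0,x],[0,x,y],[x,y,0]] : x,y ∈ F_q}. If D ∈ GL(3,F_q) satisfies D·L·D^T = L (as sets, up to scalars), then D is lower triangular with d₁₂ = d₁₃ = d₂₃ = d₃₁ = d₃₂ = 0 and d₂₂² = d₁₁d₃₃ up to a scalar; in particular the stabiliser of PG(L) in PGL(3,F_q) has order q(q-1). -/

import Mathlib

open Matrix

lemma aux_struct (F : Type*) [Field F] (h2 : (2:F) ≠ 0) (D : Matrix (Fin 3) (Fin 3) F)
    (hD : IsUnit D)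
    (hset : {A | ∃ x y : F, A = D * !![0, 0, x; 0, x, y; x, y, 0] * Dᵀ} =
        {A : Matrix (Fin 3) (Fin 3) F | ∃ x y : F, A = !![0, 0, x; 0, x, y; x, y, 0]}) :
    D 0 1 = 0 ∧ D 0 2 = 0 ∧ D 1 2 = 0 ∧ D 2 0 = 0 ∧ D 2 1 = 0 ∧
      D 0 0 ≠ 0 ∧ D 1 1 ≠ 0 ∧ D 2 2 ≠ 0 ∧ (D 1 1) ^ 2 = D 0 0 * D 2 2 := by
  have hdet : D.det ≠ 0 := ((Matrix.isUnit_iff_isUnit_det D).mp hD).ne_zero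
  have memA : D * !![0, 0, (1:F); 0, 1, 0; 1, 0, 0] * Dᵀ ∈
      {A | ∃ x y : F, A = D * !![0, 0, x; 0, x, y; x, y, 0] * Dᵀ} := ⟨1, 0, rfl⟩
  have memB : D * !![0, 0, (0:F); 0, 0, 1; 0, 1, 0] * Dᵀ ∈
      {A | ∃ x y : F, A = D * !![0, 0, x; 0, x, y; x, y, 0] * Dᵀ} := ⟨0, 1, rfl⟩
  rw [hset] at memA memB
  obtain ⟨x, y, hA⟩ := memA
  obtain ⟨x', y', hB⟩ := memB
  have eA00 := congrFun (congrFun hA 0) 0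
  have eA01 := congrFun (congrFun hA 0) 1
  have eA22 := congrFun (congrFun hA 2) 2
  have eA11 := congrFun (congrFun hA 1) 1
  have eA02 := congrFun (congrFun hA 0) 2
  have eB00 := congrFun (congrFun hB 0) 0
  have eB01 := congrFun (congrFun hB 0) 1
  have eB22 := congrFun (congrFun hB 2) 2
  have eB11 := congrFun (congrFun hB 1) 1
  have eB02 := congrFun (congrFun hB 0) 2
  simp [Matrix.mul_apply, Fin.sum_univ_three] at eA00 eA01 eA22 eA11 eA02 eB00 eB01 eB22 eB11 eB02
  rw [Matrix.det_fin_three] at hdet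
  -- b = D 0 1 = 0
  have hbc : D 0 1 * D 0 2 = 0 := by
    have h2bc : (2:F) * (D 0 1 * D 0 2) = 0 := by linear_combination eB00
    exact (mul_eq_zero.mp h2bc).resolve_left h2
  have hb : D 0 1 = 0 := by
    rcases mul_eq_zero.mp hbc with h | h
    · exact h
    · have : D 0 1 * D 0 1 = 0 := by rw [h] at eA00; linear_combination eA00
      exact mul_self_eq_zero.mp this
  -- h = D 2 1 = 0
  have hhi : D 2 1 * D 2 2 = 0 := by
    have : (2:F) * (D 2 1 * D 2 2) = 0 := by linear_combination eB22
    exact (mul_eq_zero.mp this).resolve_left h2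
  have hh : D 2 1 = 0 := by
    rcases mul_eq_zero.mp hhi with h | h
    · exact h
    · have : D 2 1 * D 2 1 = 0 := by rw [h] at eA22; linear_combination eA22
      exact mul_self_eq_zero.mp this
  have hac : D 0 0 * D 0 2 = 0 := by
    have : (2:F) * (D 0 0 * D 0 2) = 0 := by rw [hb] at eA00; linear_combination eA00
    exact (mul_eq_zero.mp this).resolve_left h2
  have hce : D 0 2 * D 1 1 = 0 := by rw [hb] at eB01; linear_combination eB01
  have hgi : D 2 0 * D 2 2 = 0 := by
    have : (2:F) * (D 2 0 * D 2 2) = 0 := by rw [hh] at eA22; linear_combination eA22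
    exact (mul_eq_zero.mp this).resolve_left h2
  -- c = D 0 2 = 0
  have hc : D 0 2 = 0 := by
    by_contra hc
    have ha : D 0 0 = 0 := by
      rcases mul_eq_zero.mp hac with h | h
      · exact h
      · exact absurd h hc
    have he : D 1 1 = 0 := (mul_eq_zero.mp hce).resolve_left hc
    apply hdet
    rw [hb, hh, ha, he]
    ring
  have haei : D 0 0 * D 1 1 * D 2 2 ≠ 0 := by
    intro h0
    apply hdet
    rw [hb, hc, hh]
    linear_combination h0
  have ha : D 0 0 ≠ 0 := fun h => haei (by rw [h]; ring)
  have he : D 1 1 ≠ 0 := fun h => haei (by rw [h]; ring)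
  have hi : D 2 2 ≠ 0 := fun h => haei (by rw [h]; ring)
  have hg : D 2 0 = 0 := (mul_eq_zero.mp hgi).resolve_right hi
  have hf : D 1 2 = 0 := by
    have : D 0 0 * D 1 2 = 0 := by rw [hb, hc] at eA01; linear_combination eA01
    exact (mul_eq_zero.mp this).resolve_left ha
  have he2 : (D 1 1) ^ 2 = D 0 0 * D 2 2 := by
    rw [hf] at eA11
    rw [hb, hc] at eA02
    linear_combination eA11 - eA02
  exact ⟨hb, hc, hf, hg, hh, ha, he, hi, he2⟩

lemma aux_tr (F : Type*) [Field F] (u t : F) :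
    (!![u,0,0;t,1,0;0,0,u⁻¹] : Matrix (Fin 3) (Fin 3) F)ᵀ = !![u,t,0;0,1,0;0,0,u⁻¹] := by
  ext i j; fin_cases i <;> fin_cases j <;> rfl

lemma aux_conj (F : Type*) [Field F] (u t x y : F) (hu : u ≠ 0) :
    !![u,0,0;t,1,0;0,0,u⁻¹] * !![0, 0, x; 0, x, y; x, y, 0] * !![u,0,0;t,1,0;0,0,u⁻¹]ᵀ =
      !![0, 0, x; 0, x, (t*x+y)*u⁻¹; x, (t*x+y)*u⁻¹, 0] := by
  rw [aux_tr]
  ext i j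
  fin_cases i <;> fin_cases j <;>
    (simp [Matrix.mul_apply, Fin.sum_univ_three, Matrix.vecHead, Matrix.vecTail]; try field_simp; try ring)
lemma aux_mem (F : Type*) [Field F] (u t : F) (hu : u ≠ 0) :
    IsUnit (!![u,0,0;t,1,0;0,0,u⁻¹]) ∧
    {A | ∃ x y : F, A = !![u,0,0;t,1,0;0,0,u⁻¹] * !![0, 0, x; 0, x, y; x, y, 0] *
        !![u,0,0;t,1,0;0,0,u⁻¹]ᵀ} =
      {A : Matrix (Fin 3) (Fin 3) F | ∃ x y : F, A = !![0, 0, x; 0, x, y; x, y, 0]} := by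
  constructor
  · rw [Matrix.isUnit_iff_isUnit_det, Matrix.det_fin_three]
    simpa using hu
  · ext A
    simp only [Set.mem_setOf_eq]
    constructor
    · rintro ⟨x, y, rfl⟩
      exact ⟨x, (t*x+y)*u⁻¹, aux_conj F u t x y hu⟩
    · rintro ⟨x, y, rfl⟩
      refine ⟨x, u*y - t*x, ?_⟩
      rw [aux_conj F u t x (u*y-t*x) hu]
      rw [show (t*x+(u*y-t*x))*u⁻¹ = y by rw [add_sub_cancel, mul_comm u y, mul_inv_cancel_right₀ hu]]

lemma aux_two_ne (F : Type*) [Field F] [Fintype F] (hq : Odd (Fintype.card F)) : (2:F) ≠ 0 := by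
  intro h20
  have hd : ringChar F ∣ 2 :=
    (CharP.cast_eq_zero_iff F (ringChar F) 2).mp (by exact_mod_cast h20)
  have hp : (ringChar F).Prime := CharP.char_is_prime F (ringChar F)
  have hchar : ringChar F = 2 := (Nat.prime_dvd_prime_iff_eq hp Nat.prime_two).mp hd
  have := FiniteField.even_card_of_char_two hchar
  rw [Nat.odd_iff] at hq
  omega

lemma aux_card (F : Type*) [Field F] [Fintype F] (h2 : (2:F) ≠ 0) :
    Nat.card (Quot (fun D E : {D : Matrix (Fin 3) (Fin 3) F // IsUnit D ∧
        {A | ∃ x y : F, A = (D : Matrix (Fin 3) (Fin 3) F) * !![0, 0, x; 0, x, y; x, y, 0] *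
            (D : Matrix (Fin 3) (Fin 3) F)ᵀ} =
          {A : Matrix (Fin 3) (Fin 3) F | ∃ x y : F, A = !![0, 0, x; 0, x, y; x, y, 0]}} =>
      ∃ c : F, c ≠ 0 ∧ (E : Matrix (Fin 3) (Fin 3) F) = c • (D : Matrix (Fin 3) (Fin 3) F))) =
      Fintype.card F * (Fintype.card F - 1) := by
  classical
  set S := {D : Matrix (Fin 3) (Fin 3) F // IsUnit D ∧
        {A | ∃ x y : F, A = (D : Matrix (Fin 3) (Fin 3) F) * !![0, 0, x; 0, x, y; x, y, 0] *
            (D : Matrix (Fin 3) (Fin 3) F)ᵀ} =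
          {A : Matrix (Fin 3) (Fin 3) F | ∃ x y : F, A = !![0, 0, x; 0, x, y; x, y, 0]}} with hSdef
  set r : S → S → Prop := fun D E =>
      ∃ c : F, c ≠ 0 ∧ (E : Matrix (Fin 3) (Fin 3) F) = c • (D : Matrix (Fin 3) (Fin 3) F)
    with hrdef
  let std : F × Fˣ → S := fun p =>
    ⟨!![(p.2:F),0,0;p.1,1,0;0,0,(p.2:F)⁻¹], aux_mem F (p.2:F) p.1 p.2.ne_zero⟩
  let h : F × Fˣ → Quot r := fun p => Quot.mk r (std p)
  let f : S → F × F := fun D =>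
    ((D : Matrix (Fin 3) (Fin 3) F) 0 0 * ((D : Matrix (Fin 3) (Fin 3) F) 1 1)⁻¹,
     (D : Matrix (Fin 3) (Fin 3) F) 1 0 * ((D : Matrix (Fin 3) (Fin 3) F) 1 1)⁻¹)
  have hwd : ∀ D E : S, r D E → f D = f E := by
    rintro ⟨D, hDu, hDs⟩ ⟨E, hEu, hEs⟩ ⟨c, hc, hce⟩
    obtain ⟨_, _, _, _, _, _, heD, _, _⟩ := aux_struct F h2 D hDu hDs
    have hce' : E = c • D := hce
    subst hce'
    simp only [f, Matrix.smul_apply, smul_eq_mul]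
    rw [Prod.mk.injEq]
    constructor <;> field_simp
  let g : Quot r → F × F := Quot.lift f hwd
  have hgh : ∀ p : F × Fˣ, g (h p) = ((p.2 : F), p.1) := by
    intro p
    show f (std p) = _
    simp [f, std]
  have hbij : Function.Bijective h := by
    constructor
    · intro p q hpq
      have := congrArg g hpq
      rw [hgh, hgh] at this
      obtain ⟨h1, h2'⟩ := Prod.mk.injEq .. ▸ this
      exact Prod.ext (by exact h2') (Units.ext h1)
    · intro Q
      induction Q using Quot.ind with
      | _ D =>
        obtain ⟨hb, hc, hf, hg, hh, ha, he, hi, he2⟩ := aux_struct F h2 D.1 D.2.1 D.2.2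
        refine ⟨(D.1 1 0 * (D.1 1 1)⁻¹,
          Units.mk0 (D.1 0 0 * (D.1 1 1)⁻¹) (mul_ne_zero ha (inv_ne_zero he))), ?_⟩
        apply Quot.sound
        refine ⟨D.1 1 1, he, ?_⟩
        ext i j
        fin_cases i <;> fin_cases j <;>
          simp [std, hb, hc, hf, hg, hh, Matrix.smul_apply, smul_eq_mul]
        all_goals field_simp
        all_goals try ring
        all_goals linear_combination -he2
  calc Nat.card (Quot r) = Nat.card (F × Fˣ) := (Nat.card_congr (Equiv.ofBijective h hbij)).symm
    _ = Nat.card F * Nat.card Fˣ := Nat.card_prod F Fˣ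
    _ = Fintype.card F * (Fintype.card F - 1) := by
        rw [Nat.card_eq_fintype_card, Nat.card_eq_fintype_card, Fintype.card_units]

/-- For `q` odd and `L = {[[0,0,x],[0,x,y],[x,y,0]] : x, y ∈ F_q}`: every `D ∈ GL(3, F_q)`
stabilising `L` under congruence is, up to a nonzero scalar, lower triangular with
`d₁₂ = d₁₃ = d₂₃ = d₃₁ = d₃₂ = 0` and `d₂₂² = d₁₁·d₃₃`; and the setwise stabiliser of
`PG(L)` in `PGL(3, F_q)` (congruence classes of stabilising matrices modulo scalars) has
order `q(q - 1)`. -/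
theorem stmt_17 (F : Type*) [Field F] [Fintype F] (hq : Odd (Fintype.card F)) :
    (∀ D : Matrix (Fin 3) (Fin 3) F, IsUnit D →
      {A | ∃ x y : F, A = D * !![0, 0, x; 0, x, y; x, y, 0] * Dᵀ} =
        {A : Matrix (Fin 3) (Fin 3) F | ∃ x y : F, A = !![0, 0, x; 0, x, y; x, y, 0]} →
      ∃ c : F, c ≠ 0 ∧ (c • D) 0 1 = 0 ∧ (c • D) 0 2 = 0 ∧ (c • D) 1 2 = 0 ∧
        (c • D) 2 0 = 0 ∧ (c • D) 2 1 = 0 ∧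
        ((c • D) 1 1) ^ 2 = (c • D) 0 0 * (c • D) 2 2) ∧
    Nat.card (Quot (fun D E : {D : Matrix (Fin 3) (Fin 3) F // IsUnit D ∧
        {A | ∃ x y : F, A = (D : Matrix (Fin 3) (Fin 3) F) * !![0, 0, x; 0, x, y; x, y, 0] *
            (D : Matrix (Fin 3) (Fin 3) F)ᵀ} =
          {A : Matrix (Fin 3) (Fin 3) F | ∃ x y : F, A = !![0, 0, x; 0, x, y; x, y, 0]}} =>
      ∃ c : F, c ≠ 0 ∧ (E : Matrix (Fin 3) (Fin 3) F) = c • (D : Matrix (Fin 3) (Fin 3) F))) =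
      Fintype.card F * (Fintype.card F - 1) := by
  have h2 : (2:F) ≠ 0 := aux_two_ne F hq
  constructor
  · intro D hD hset
    obtain ⟨hb, hc, hf, hg, hh, ha, he, hi, he2⟩ := aux_struct F h2 D hD hset
    exact ⟨1, one_ne_zero, by
      simp only [one_smul]
      exact ⟨hb, hc, hf, hg, hh, he2⟩⟩
  · exact aux_card F h2
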